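/- Let Φ be an n×n real matrix with nonnegative entries such that every complex eigenvalue of Φ has modulus strictly less than 1, and let D be a diagonal n×n matrix with 0 < Dᵢᵢ < 1 for all i. Then the matrix Φ̄ = Iₙ − D + DΦ has nonnegative entries and every complex eigenvalue of Φ̄ has modulus strictly less than 1. -/

import Mathlib

open Matrix Polynomial Filter

attribute [local instance] Matrix.linftyOpNormedRing Matrix.linftyOpNormedAlgebra

/-- An eigenvector exists for each root of the characteristic polynomial. -/
lemma aux_eigvec {n : ℕ} (M : Matrix (Fin n) (Fin n) ℂ) (z : ℂ)
    (h : M.charpoly.IsRoot z) : ∃ v : Fin n → ℂ, v ≠ 0 ∧ M.mulVec v = z • v := by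
  have hdet : (scalar (Fin n) z - M).det = 0 := by
    have := h
    rw [Polynomial.IsRoot, Matrix.charpoly, eval_det,
      matPolyEquiv_charmatrix, eval_sub, eval_X, eval_C] at this
    exact this
  obtain ⟨v, hv0, hv⟩ := (Matrix.exists_mulVec_eq_zero_iff).mpr hdet
  refine ⟨v, hv0, ?_⟩
  rw [Matrix.sub_mulVec, sub_eq_zero] at hv
  have : (scalar (Fin n) z).mulVec v = z • v := by
    rw [Matrix.scalar_apply, ← Matrix.smul_one_eq_diagonal,
      Matrix.smul_mulVec, Matrix.one_mulVec]
  rw [← hv, this]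

/-- If all roots of the characteristic polynomial lie in the open unit disc, the
spectral radius is less than one. -/
lemma aux_specrad {n : ℕ} (A : Matrix (Fin n) (Fin n) ℂ)
    (h : ∀ z : ℂ, A.charpoly.IsRoot z → ‖z‖ < 1) :
    spectralRadius ℂ A < 1 := by
  have hroot : ∀ z ∈ spectrum ℂ A, A.charpoly.IsRoot z := by
    intro z hz
    rw [spectrum.mem_iff] at hz
    have hdet : (algebraMap ℂ (Matrix (Fin n) (Fin n) ℂ) z - A).det = 0 := by
      by_contra hne
      exact hz ((Matrix.isUnit_iff_isUnit_det _).mpr (isUnit_iff_ne_zero.mpr hne))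
    have hsc : (algebraMap ℂ (Matrix (Fin n) (Fin n) ℂ)) z = scalar (Fin n) z := by
      simp [Matrix.algebraMap_eq_diagonal, Matrix.scalar_apply]
    rw [Polynomial.IsRoot, Matrix.charpoly, eval_det,
      matPolyEquiv_charmatrix, eval_sub, eval_X, eval_C]
    rwa [hsc] at hdet
  have hne : A.charpoly ≠ 0 := A.charpoly_monic.ne_zero
  set s : Finset ℂ := A.charpoly.roots.toFinset with hs
  set b : NNReal := s.sup (fun z => ‖z‖₊) with hbdef
  have hb1 : b < 1 := by
    rw [hbdef]
    apply Finset.sup_lt_iff (by norm_num : (⊥ : NNReal) < 1) |>.mpr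
    intro z hz
    have hzr : A.charpoly.IsRoot z := by
      rw [hs, Multiset.mem_toFinset, Polynomial.mem_roots hne] at hz
      exact hz
    have := h z hzr
    rw [← NNReal.coe_lt_coe]
    simpa using this
  have hle : spectralRadius ℂ A ≤ (b : ENNReal) := by
    rw [spectralRadius]
    refine iSup₂_le fun z hz => ?_
    have : z ∈ s := by
      rw [hs, Multiset.mem_toFinset, Polynomial.mem_roots hne]
      exact hroot z hz
    exact_mod_cast Finset.le_sup (f := fun z => ‖z‖₊) this
  calc spectralRadius ℂ A ≤ (b : ENNReal) := hle
    _ < 1 := by exact_mod_cast hb1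

/-- A nonnegative matrix with spectral radius (of the complexification) below one
cannot dominate a nonzero nonnegative vector. -/
lemma aux_contra {n : ℕ} (Φ : Matrix (Fin n) (Fin n) ℝ)
    (hΦnonneg : ∀ i j, 0 ≤ Φ i j)
    (hΦspec : ∀ z : ℂ, (Φ.map (fun x : ℝ => (x : ℂ))).charpoly.IsRoot z →
      ‖z‖ < 1)
    (w : Fin n → ℝ) (hw0 : ∀ i, 0 ≤ w i) (hwne : w ≠ 0)
    (hineq : ∀ i, w i ≤ Φ.mulVec w i) : False := by
  have hpow : ∀ k : ℕ, ∀ i j, 0 ≤ (Φ ^ k) i j := by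
    intro k
    induction k with
    | zero => intro i j; by_cases hij : i = j <;>
        simp [pow_zero, Matrix.one_apply, hij]
    | succ k ih =>
      intro i j
      rw [pow_succ, Matrix.mul_apply]
      exact Finset.sum_nonneg fun l _ => mul_nonneg (ih i l) (hΦnonneg l j)
  have hpowv : ∀ k : ℕ, ∀ i, w i ≤ (Φ ^ k).mulVec w i := by
    intro k
    induction k with
    | zero => intro i; simp [pow_zero, Matrix.one_mulVec]
    | succ k ih =>
      intro i
      rw [pow_succ', ← Matrix.mulVec_mulVec]
      calc w i ≤ Φ.mulVec w i := hineq i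
        _ ≤ Φ.mulVec ((Φ ^ k).mulVec w) i := by
            rw [Matrix.mulVec, Matrix.mulVec, dotProduct, dotProduct]
            exact Finset.sum_le_sum fun j _ =>
              mul_le_mul_of_nonneg_left (ih j) (hΦnonneg i j)
  obtain ⟨i1, hi1⟩ : ∃ i, w i ≠ 0 := Function.ne_iff.mp hwne
  have hn : Nonempty (Fin n) := ⟨i1⟩
  obtain ⟨i0, _, hi0⟩ := Finset.exists_max_image Finset.univ w ⟨i1, Finset.mem_univ i1⟩
  have hwi0 : 0 < w i0 := lt_of_lt_of_le ((hw0 i1).lt_of_ne (Ne.symm hi1))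
    (hi0 i1 (Finset.mem_univ i1))
  have hrow : ∀ k : ℕ, (1 : ℝ) ≤ ∑ j, (Φ ^ k) i0 j := by
    intro k
    have h1 : w i0 ≤ ∑ j, (Φ ^ k) i0 j * w j := hpowv k i0
    have h2 : ∑ j, (Φ ^ k) i0 j * w j ≤ ∑ j, (Φ ^ k) i0 j * w i0 :=
      Finset.sum_le_sum fun j _ =>
        mul_le_mul_of_nonneg_left (hi0 j (Finset.mem_univ j)) (hpow k i0 j)
    have h3 : w i0 ≤ (∑ j, (Φ ^ k) i0 j) * w i0 := by
      rw [Finset.sum_mul]; exact h1.trans h2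
    nlinarith [h3, hwi0]
  set A : Matrix (Fin n) (Fin n) ℂ := Φ.map (fun x : ℝ => (x : ℂ)) with hA
  haveI : CompleteSpace (Matrix (Fin n) (Fin n) ℂ) := FiniteDimensional.complete ℂ _
  have hsr : spectralRadius ℂ A < 1 := aux_specrad A hΦspec
  have hG := spectrum.pow_nnnorm_pow_one_div_tendsto_nhds_spectralRadius A
  have hev : ∀ᶠ k : ℕ in atTop, ((‖A ^ k‖₊ : ENNReal) ^ (1 / (k : ℝ))) < 1 :=
    hG.eventually_lt_const hsr
  obtain ⟨k, hk1, hk⟩ := (hev.and (eventually_ge_atTop 1)).exists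
  have hklt : (‖A ^ k‖₊ : ENNReal) < 1 := by
    by_contra hge
    push_neg at hge
    have : (1 : ENNReal) ≤ (‖A ^ k‖₊ : ENNReal) ^ (1 / (k : ℝ)) := by
      calc (1 : ENNReal) = 1 ^ (1 / (k : ℝ)) := (ENNReal.one_rpow _).symm
        _ ≤ (‖A ^ k‖₊ : ENNReal) ^ (1 / (k : ℝ)) :=
            ENNReal.rpow_le_rpow hge (by positivity)
    exact absurd hk1 (not_lt.mpr this)
  have hAk : A ^ k = (Φ ^ k).map (fun x : ℝ => (x : ℂ)) := by
    rw [hA]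
    have : ∀ (M : Matrix (Fin n) (Fin n) ℝ), M.map (fun x : ℝ => (x : ℂ))
        = (algebraMap ℝ ℂ).mapMatrix M := fun M => rfl
    rw [this, this, ← map_pow]
  have hlow : (1 : NNReal) ≤ ‖A ^ k‖₊ := by
    rw [Matrix.linfty_opNNNorm_def]
    refine le_trans ?_ (Finset.le_sup (Finset.mem_univ i0))
    rw [← NNReal.coe_le_coe]
    push_cast
    calc (1 : ℝ) ≤ ∑ j, (Φ ^ k) i0 j := hrow k
      _ = ∑ j, ‖(A ^ k) i0 j‖ := by
          apply Finset.sum_congr rfl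
          intro j _
          rw [hAk]
          simp [Matrix.map_apply, Complex.norm_real, abs_of_nonneg (hpow k i0 j)]
  have : (1 : ENNReal) ≤ (‖A ^ k‖₊ : ENNReal) := by exact_mod_cast hlow
  exact absurd hklt (not_lt.mpr this)

lemma aux_key (d : ℝ) (z : ℂ) (hd0 : 0 < d) (hd1 : d ≤ 1) (hz : 1 ≤ ‖z‖) :
    d * ‖z‖ ≤ ‖z - 1 + (d : ℂ)‖ := by
  have h1 : (1 : ℝ) ≤ z.re * z.re + z.im * z.im := by
    have : (1:ℝ) ≤ (‖z‖) ^ 2 := by nlinarith [norm_nonneg z]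
    rwa [Complex.sq_norm, Complex.normSq_apply] at this
  refine le_of_pow_le_pow_left₀ two_ne_zero (norm_nonneg _) ?_
  rw [mul_pow, Complex.sq_norm, Complex.sq_norm, Complex.normSq_apply, Complex.normSq_apply]
  simp only [Complex.add_re, Complex.sub_re, Complex.one_re, Complex.ofReal_re,
    Complex.add_im, Complex.sub_im, Complex.one_im, Complex.ofReal_im, sub_zero, add_zero]
  nlinarith [mul_nonneg (sub_nonneg.mpr hd1)
      (add_nonneg (mul_self_nonneg (z.re - 1)) (mul_self_nonneg z.im)),
    mul_nonneg (mul_nonneg (sub_nonneg.mpr h1) hd0.le) (sub_nonneg.mpr hd1)]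

/-- If `Φ` is entrywise nonnegative with spectral radius (largest modulus of a complex
eigenvalue) strictly less than one, and `D` is diagonal with `0 < Dᵢᵢ < 1`, then
`Φ̄ = Iₙ - D + DΦ` is again entrywise nonnegative with spectral radius strictly less
than one. -/
theorem normalization_stays_in_hawkes_parameter_space
    {n : ℕ} (Φ D : Matrix (Fin n) (Fin n) ℝ)
    (hΦnonneg : ∀ i j, 0 ≤ Φ i j)
    (hΦspec : ∀ z : ℂ, (Φ.map (fun x : ℝ => (x : ℂ))).charpoly.IsRoot z →
      ‖z‖ < 1)
    (hD : D.IsDiag) (hDpos : ∀ i, 0 < D i i) (hDlt : ∀ i, D i i < 1)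
    (Φbar : Matrix (Fin n) (Fin n) ℝ)
    (hΦbar : Φbar = 1 - D + D * Φ) :
    (∀ i j, 0 ≤ Φbar i j) ∧
      ∀ z : ℂ, (Φbar.map (fun x : ℝ => (x : ℂ))).charpoly.IsRoot z →
        ‖z‖ < 1 := by
  have hDΦ : ∀ i j, (D * Φ) i j = D i i * Φ i j := by
    intro i j
    rw [Matrix.mul_apply]
    exact Finset.sum_eq_single_of_mem i (Finset.mem_univ i)
      (fun k _ hk => by rw [hD (Ne.symm hk), zero_mul])
  have hentry : ∀ i j, Φbar i j = (if i = j then 1 - D i i else 0) + D i i * Φ i j := by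
    intro i j
    rw [hΦbar]
    by_cases h : i = j
    · subst h
      simp [Matrix.add_apply, Matrix.sub_apply, Matrix.one_apply, hDΦ]
    · simp [Matrix.add_apply, Matrix.sub_apply, Matrix.one_apply, hDΦ, h, hD h]
  constructor
  · intro i j
    rw [hentry]
    by_cases h : i = j
    · subst h
      rw [if_pos rfl]
      nlinarith [hDlt i, hDpos i, hΦnonneg i i, mul_nonneg (hDpos i).le (hΦnonneg i i)]
    · simp only [if_neg h, zero_add]
      exact mul_nonneg (hDpos i).le (hΦnonneg i j)
  · intro z hz
    by_contra hlt
    push_neg at hlt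
    obtain ⟨v, hv0, hv⟩ := aux_eigvec _ z hz
    set w : Fin n → ℝ := fun i => ‖v i‖ with hw
    have hw0 : ∀ i, 0 ≤ w i := fun i => norm_nonneg _
    have hwne : w ≠ 0 := by
      obtain ⟨i, hi⟩ := Function.ne_iff.mp hv0
      exact Function.ne_iff.mpr ⟨i, by simp [hw, norm_ne_zero_iff.mpr hi]⟩
    refine aux_contra Φ hΦnonneg hΦspec w hw0 hwne fun i => ?_
    set d : ℝ := D i i with hd
    have hvi := congrFun hv i
    rw [Matrix.mulVec, dotProduct, Pi.smul_apply, smul_eq_mul] at hvi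
    have hvi' : ∑ j, ((Φbar i j : ℝ) : ℂ) * v j = z * v i := by
      simpa [Matrix.map_apply] using hvi
    set S : ℂ := ∑ j, ((Φ i j : ℝ) : ℂ) * v j with hS
    have hsplit : ∀ j, ((Φbar i j : ℝ) : ℂ) * v j
        = (if i = j then (1 - (d : ℂ)) * v j else 0)
          + (d : ℂ) * (((Φ i j : ℝ) : ℂ) * v j) := by
      intro j
      rw [hentry i j]
      push_cast
      rw [hd]
      by_cases h : i = j <;> simp [h] <;> ring
    have hexp : z * v i = (1 - (d : ℂ)) * v i + (d : ℂ) * S := by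
      rw [← hvi', Finset.sum_congr rfl fun j _ => hsplit j, Finset.sum_add_distrib,
        Finset.sum_ite_eq, ← Finset.mul_sum, ← hS]
      simp
    have hdS : (d : ℂ) * S = (z - 1 + (d : ℂ)) * v i := by
      linear_combination -hexp
    have habs : d * ‖S‖ = ‖z - 1 + (d : ℂ)‖ * ‖v i‖ := by
      have := congrArg norm hdS
      rwa [norm_mul, norm_mul, Complex.norm_real, Real.norm_eq_abs, abs_of_pos (hDpos i)] at this
    have hkey : d * ‖z‖ ≤ ‖z - 1 + (d : ℂ)‖ :=
      aux_key d z (hDpos i) (hDlt i).le hlt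
    have hviS : ‖v i‖ ≤ ‖S‖ := by
      have h2 : d * (‖z‖ * ‖v i‖) ≤ d * ‖S‖ := by
        rw [habs]
        calc d * (‖z‖ * ‖v i‖)
            = (d * ‖z‖) * ‖v i‖ := by ring
          _ ≤ ‖z - 1 + (d : ℂ)‖ * ‖v i‖ :=
              mul_le_mul_of_nonneg_right hkey (norm_nonneg _)
      have h3 : ‖z‖ * ‖v i‖ ≤ ‖S‖ :=
        le_of_mul_le_mul_left h2 (hDpos i)
      calc ‖v i‖ = 1 * ‖v i‖ := (one_mul _).symm
        _ ≤ ‖z‖ * ‖v i‖ :=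
            mul_le_mul_of_nonneg_right hlt (norm_nonneg _)
        _ ≤ ‖S‖ := h3
    have htri : ‖S‖ ≤ Φ.mulVec w i := by
      rw [hS, Matrix.mulVec, dotProduct]
      refine le_trans (norm_sum_le _ _) ?_
      apply le_of_eq
      apply Finset.sum_congr rfl
      intro j _
      rw [norm_mul, Complex.norm_real, Real.norm_eq_abs, abs_of_nonneg (hΦnonneg i j)]
    exact le_trans hviS htri
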